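/- arXiv:1601.05843 — 2 statements merged into one kernel-verified Lean document; each statement's English description precedes it below -/
import Mathlib

section
/- Let n ≥ 1 and let u : ℝⁿ → ℝ be convex. Suppose that for some unit vector e′ the set {x ∈ ℝⁿ : u(x) = 0} contains the whole straight line {t e′ : t ∈ ℝ}. Then u(x + t e′) = u(x) for every x ∈ ℝⁿ and every t ∈ ℝ. -/
open MeasureTheory Metric Set Filter

noncomputable section

theorem convex_invariant_along_line_in_zero_set
    (n : ℕ) (hn : 1 ≤ n)
    (u : EuclideanSpace ℝ (Fin n) → ℝ)
    (hu : ConvexOn ℝ Set.univ u)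
    (e' : EuclideanSpace ℝ (Fin n)) (he' : ‖e'‖ = 1)
    (hline : ∀ t : ℝ, u (t • e') = 0) :
    ∀ (x : EuclideanSpace ℝ (Fin n)) (t : ℝ), u (x + t • e') = u x := by
  have key : ∀ (x : EuclideanSpace ℝ (Fin n)) (t : ℝ), u (x + t • e') ≤ u x := by
    intro x t
    by_contra h
    push_neg at h
    set δ := u (x + t • e') - u x with hδ
    have hδpos : 0 < δ := by simp [hδ]; linarith
    set C := u ((2:ℝ) • x) / 2 with hC
    have hbound : ∀ s : ℝ, u (x + s • e') ≤ C := by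
      intro s
      have h2 := hu.2 (Set.mem_univ ((2:ℝ) • x)) (Set.mem_univ ((2*s) • e'))
        (by norm_num : (0:ℝ) ≤ 1/2) (by norm_num : (0:ℝ) ≤ 1/2) (by norm_num)
      have heq : (1/2 : ℝ) • ((2:ℝ) • x) + (1/2 : ℝ) • ((2*s) • e') = x + s • e' := by
        module
      rw [heq, hline (2*s)] at h2
      simp only [smul_eq_mul] at h2
      simp only [hC]
      linarith
    obtain ⟨r, hr1, hr2⟩ : ∃ r : ℝ, 1 ≤ r ∧ C < u x + r * δ := by
      refine ⟨max 1 ((C - u x)/δ + 1), le_max_left _ _, ?_⟩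
      have hle : (C - u x)/δ + 1 ≤ max 1 ((C - u x)/δ + 1) := le_max_right _ _
      have h2 : C - u x < ((C - u x)/δ + 1) * δ := by
        rw [add_mul, div_mul_cancel₀ _ (ne_of_gt hδpos)]
        linarith
      nlinarith [hle, hδpos]
    have hrpos : 0 < r := lt_of_lt_of_le one_pos hr1
    have ha : (0:ℝ) ≤ 1 - 1/r := by
      have h1r : 1/r ≤ 1 := by rw [div_le_one (by linarith)]; linarith
      linarith
    have hb0 : (0:ℝ) ≤ 1/r := by positivity
    have hab : (1 - 1/r) + 1/r = (1:ℝ) := by ring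
    have hconv := hu.2 (Set.mem_univ x) (Set.mem_univ (x + (r*t) • e')) ha hb0 hab
    have heq : (1 - 1/r) • x + (1/r : ℝ) • (x + (r*t) • e') = x + t • e' := by
      match_scalars <;> field_simp <;> ring
    rw [heq] at hconv
    have hb := hbound (r*t)
    have h4 : r * u (x + t • e') ≤ (r - 1) * u x + u (x + (r*t) • e') := by
      have hr0 : (r : ℝ) ≠ 0 := ne_of_gt hrpos
      have := mul_le_mul_of_nonneg_left hconv (le_of_lt hrpos)
      calc r * u (x + t • e') ≤ r * ((1 - 1/r) * u x + (1/r) * u (x + (r*t) • e')) := this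
        _ = (r - 1) * u x + u (x + (r*t) • e') := by
            field_simp <;> ring
    nlinarith [hb, hr2]
  intro x t
  have h1 := key x t
  have h2 := key (x + t • e') (-t)
  have heq : (x + t • e') + (-t) • e' = x := by module
  rw [heq] at h2
  linarith
end
end

section
/- Let n ≥ 1, s ∈ (0,1), 0 < λ ≤ Λ. There exists a constant C > 0, depending only on n, s, λ, Λ, such that for every unit vector e ∈ ℝⁿ, setting φ(x) := exp(−|e·x|), the following holds: for every admissible kernel μ and every x ∈ ℝⁿ with e·x ≠ 0, the function y ↦ |δ²φ(x,y)|·|y|^{−n−2s} is integrable on ℝⁿ and L_μ φ(x) = ∫_{ℝⁿ} δ²φ(x,y) μ(y/|y|)|y|^{−n−2s} dy ≤ C. -/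
open MeasureTheory Metric Set Filter
open scoped RealInnerProductSpace Pointwise

noncomputable section

/-- Second-order centered difference `δ²v(x,y) = (v(x+y)+v(x-y))/2 - v(x)`. -/
def d2 {n : ℕ} (v : EuclideanSpace ℝ (Fin n) → ℝ) (x y : EuclideanSpace ℝ (Fin n)) : ℝ :=
  (v (x + y) + v (x - y)) / 2 - v x

/-- The kernel `|y|^(-n-2s)`. -/
def kk (n : ℕ) (s : ℝ) (y : EuclideanSpace ℝ (Fin n)) : ℝ :=
  ‖y‖ ^ (-((n : ℝ) + 2 * s))

/-- Admissible kernels of the class `𝓛_*`: measurable, even, with `λ ≤ μ ≤ Λ` on the sphere. -/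
def IsKernel {n : ℕ} (lam Lam : ℝ) (μ : EuclideanSpace ℝ (Fin n) → ℝ) : Prop :=
  Measurable μ ∧ (∀ θ, μ (-θ) = μ θ) ∧
    ∀ θ : EuclideanSpace ℝ (Fin n), ‖θ‖ = 1 → lam ≤ μ θ ∧ μ θ ≤ Lam

/-- The operator `L_μ` of the class `𝓛_*`, evaluated pointwise. -/
def opL {n : ℕ} (s : ℝ) (μ v : EuclideanSpace ℝ (Fin n) → ℝ)
    (x : EuclideanSpace ℝ (Fin n)) : ℝ :=
  ∫ y, d2 v x y * (μ (‖y‖⁻¹ • y) * kk n s y)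

/-- Integrability of `y ↦ |δ²v(x,y)| |y|^(-n-2s)`. -/
def intOK {n : ℕ} (s : ℝ) (v : EuclideanSpace ℝ (Fin n) → ℝ)
    (x : EuclideanSpace ℝ (Fin n)) : Prop :=
  Integrable (fun y => |d2 v x y| * kk n s y)

section Aux

/-- key upper bound -/
lemma E_le_cosh (a t : ℝ) :
    (Real.exp (-|a + t|) + Real.exp (-|a - t|)) / 2 - Real.exp (-|a|) ≤ Real.cosh t - 1 := by
  have key : Real.exp (-|a + t|) + Real.exp (-|a - t|)
      ≤ Real.exp (-|a| + t) + Real.exp (-|a| - t) := by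
    rcases le_or_gt 0 a with ha | ha
    · have h1 : Real.exp (-|a + t|) ≤ Real.exp (-|a| - t) := by
        apply Real.exp_le_exp.mpr
        have : a + t ≤ |a + t| := le_abs_self _
        rw [abs_of_nonneg ha]; linarith
      have h2 : Real.exp (-|a - t|) ≤ Real.exp (-|a| + t) := by
        apply Real.exp_le_exp.mpr
        have : a - t ≤ |a - t| := le_abs_self _
        rw [abs_of_nonneg ha]; linarith
      linarith
    · have h1 : Real.exp (-|a + t|) ≤ Real.exp (-|a| + t) := by
        apply Real.exp_le_exp.mpr
        have : -(a + t) ≤ |a + t| := neg_le_abs _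
        rw [abs_of_neg ha]; linarith
      have h2 : Real.exp (-|a - t|) ≤ Real.exp (-|a| - t) := by
        apply Real.exp_le_exp.mpr
        have : -(a - t) ≤ |a - t| := neg_le_abs _
        rw [abs_of_neg ha]; linarith
      linarith
  have hea : Real.exp (-|a|) ≤ 1 := Real.exp_le_one_iff.mpr (by simp [abs_nonneg])
  have hcosh : Real.exp (-|a| + t) + Real.exp (-|a| - t)
      = Real.exp (-|a|) * (2 * Real.cosh t) := by
    rw [Real.cosh_eq]; rw [Real.exp_add, sub_eq_add_neg, Real.exp_add]; ring
  have h1 : 1 ≤ Real.cosh t := Real.one_le_cosh t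
  have hepos : 0 < Real.exp (-|a|) := Real.exp_pos _
  nlinarith [key]

lemma cosh_sub_one_le (t : ℝ) (ht : |t| ≤ 1) : Real.cosh t - 1 ≤ 2 * t ^ 2 := by
  wlog h : 0 ≤ t generalizing t
  · have := this (-t) (by rwa [abs_neg]) (by linarith [lt_of_not_ge h])
    simpa using this
  have h2 : Real.cosh t - 1 = (Real.exp (t/2) - Real.exp (-(t/2))) ^ 2 / 2 := by
    rw [Real.cosh_eq]
    have e1 : Real.exp (t/2) * Real.exp (t/2) = Real.exp t := by
      rw [← Real.exp_add]; ring_nf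
    have e2 : Real.exp (-(t/2)) * Real.exp (-(t/2)) = Real.exp (-t) := by
      rw [← Real.exp_add]; ring_nf
    have e3 : Real.exp (t/2) * Real.exp (-(t/2)) = 1 := by
      rw [← Real.exp_add]; simp
    nlinarith [e1, e2, e3]
  rw [h2]
  have hu : Real.exp (t/2) - Real.exp (-(t/2)) ≤ t * Real.exp (t/2) := by
    have := Real.add_one_le_exp (-t)
    have h3 : (1 - t) * Real.exp (t/2) * Real.exp (t/2) ≤ 1 := by
      have e1 : Real.exp (t/2) * Real.exp (t/2) = Real.exp t := by
        rw [← Real.exp_add]; ring_nf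
      have e4 : Real.exp (-t) * Real.exp t = 1 := by rw [← Real.exp_add]; simp
      nlinarith [Real.exp_pos t, Real.exp_pos (-t)]
    have e3 : Real.exp (t/2) * Real.exp (-(t/2)) = 1 := by rw [← Real.exp_add]; simp
    have hp : 0 < Real.exp (-(t/2)) := Real.exp_pos _
    nlinarith [h3, Real.exp_pos (t/2)]
  have hnn : 0 ≤ Real.exp (t/2) - Real.exp (-(t/2)) := by
    have : Real.exp (-(t/2)) ≤ Real.exp (t/2) := Real.exp_le_exp.mpr (by linarith)
    linarith
  have hexp : Real.exp (t/2) ≤ Real.exp (1/2) := Real.exp_le_exp.mpr (by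
    rw [abs_of_nonneg h] at ht; linarith)
  have he : Real.exp (1/2 : ℝ) ≤ 2 := by
    nlinarith [Real.exp_one_lt_d9, Real.exp_pos (1/2:ℝ),
      Real.exp_add (1/2:ℝ) (1/2:ℝ), sq_nonneg (Real.exp (1/2:ℝ) - 2)]
  have hle : Real.exp (t/2) - Real.exp (-(t/2)) ≤ 2 * t := by
    have ht' : 0 ≤ t := h
    nlinarith [hu, hexp, he, Real.exp_pos (t/2)]
  nlinarith [hnn, hle]

lemma E_nonneg (a t : ℝ) (h : |t| ≤ |a|) :
    0 ≤ (Real.exp (-|a + t|) + Real.exp (-|a - t|)) / 2 - Real.exp (-|a|) := by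
  have hsum : |a + t| + |a - t| = 2 * |a| := by
    rcases le_or_gt 0 a with ha | ha
    · rw [abs_of_nonneg ha] at *
      rw [abs_of_nonneg (by cases abs_le.mp h; linarith),
        abs_of_nonneg (by cases abs_le.mp h; linarith)]
      ring
    · rw [abs_of_neg ha] at *
      rw [abs_of_nonpos (by cases abs_le.mp h; linarith),
        abs_of_nonpos (by cases abs_le.mp h; linarith)]
      ring
  set p := -|a + t|
  set q := -|a - t|
  have hpq : (p + q) / 2 = -|a| := by simp only [p, q]; linarith [hsum]
  have am : 2 * Real.exp ((p + q)/2) ≤ Real.exp p + Real.exp q := by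
    have e1 : Real.exp (p/2) * Real.exp (p/2) = Real.exp p := by rw [← Real.exp_add]; ring_nf
    have e2 : Real.exp (q/2) * Real.exp (q/2) = Real.exp q := by rw [← Real.exp_add]; ring_nf
    have e3 : Real.exp (p/2) * Real.exp (q/2) = Real.exp ((p+q)/2) := by
      rw [← Real.exp_add]; ring_nf
    nlinarith [sq_nonneg (Real.exp (p/2) - Real.exp (q/2))]
  rw [hpq] at am
  linarith

lemma E_le_one (a t : ℝ) :
    |(Real.exp (-|a + t|) + Real.exp (-|a - t|)) / 2 - Real.exp (-|a|)| ≤ 1 := by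
  have h1 : Real.exp (-|a + t|) ≤ 1 := Real.exp_le_one_iff.mpr (by simp)
  have h2 : Real.exp (-|a - t|) ≤ 1 := Real.exp_le_one_iff.mpr (by simp)
  have h3 : Real.exp (-|a|) ≤ 1 := Real.exp_le_one_iff.mpr (by simp)
  have p1 := Real.exp_pos (-|a + t|)
  have p2 := Real.exp_pos (-|a - t|)
  have p3 := Real.exp_pos (-|a|)
  rw [abs_le]; constructor <;> nlinarith

lemma intOn_compl_rpow (n : ℕ) {q : ℝ} (hq : (n : ℝ) < q) :
    IntegrableOn (fun y : EuclideanSpace ℝ (Fin n) => ‖y‖ ^ (-q)) (ball 0 1)ᶜ := by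
  have hq0 : 0 < q := lt_of_le_of_lt (Nat.cast_nonneg n) hq
  have hfr : ((Module.finrank ℝ (EuclideanSpace ℝ (Fin n)) : ℝ)) < q := by
    rwa [finrank_euclideanSpace_fin]
  have base : Integrable (fun y : EuclideanSpace ℝ (Fin n) => (1 + ‖y‖) ^ (-q)) :=
    integrable_one_add_norm hfr
  have base2 : Integrable (fun y : EuclideanSpace ℝ (Fin n) => 2 ^ q * (1 + ‖y‖) ^ (-q)) :=
    base.const_mul _
  refine Integrable.mono' base2.integrableOn ?_ ?_
  · apply Measurable.aestronglyMeasurable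
    fun_prop
  · refine (ae_restrict_iff' measurableSet_ball.compl).mpr (Filter.Eventually.of_forall ?_)
    intro y hy
    have hy1 : 1 ≤ ‖y‖ := by
      simpa [mem_ball, dist_eq_norm] using hy
    have hy0 : 0 < ‖y‖ := lt_of_lt_of_le one_pos hy1
    rw [Real.norm_eq_abs, abs_of_nonneg (Real.rpow_nonneg (norm_nonneg _) _)]
    have h1 : (1 + ‖y‖ : ℝ) ≤ 2 * ‖y‖ := by linarith
    have h2 : (2 * ‖y‖) ^ (-q) ≤ (1 + ‖y‖) ^ (-q) :=
      Real.rpow_le_rpow_of_nonpos (by linarith) h1 (by linarith)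
    have h3 : (2 * ‖y‖ : ℝ) ^ (-q) = 2 ^ (-q) * ‖y‖ ^ (-q) :=
      Real.mul_rpow (by norm_num) (norm_nonneg _)
    have h4 : (2:ℝ) ^ q * 2 ^ (-q) = 1 := by
      rw [← Real.rpow_add (by norm_num)]; simp
    calc ‖y‖ ^ (-q) = 2 ^ q * (2 ^ (-q) * ‖y‖ ^ (-q)) := by
          rw [← mul_assoc, h4, one_mul]
      _ = 2 ^ q * (2 * ‖y‖) ^ (-q) := by rw [h3]
      _ ≤ 2 ^ q * (1 + ‖y‖) ^ (-q) := by
          have : (0:ℝ) < 2 ^ q := Real.rpow_pos_of_pos (by norm_num) _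
          nlinarith [h2]

lemma intOn_ball_rpow (n : ℕ) {p : ℝ} (hp : -(n : ℝ) < p) :
    IntegrableOn (fun y : EuclideanSpace ℝ (Fin n) => ‖y‖ ^ p) (ball 0 1) := by
  rcases le_or_gt 0 p with hp0 | hp0
  · refine Measure.integrableOn_of_bounded (M := 1) measure_ball_lt_top.ne
      (by apply Measurable.aestronglyMeasurable; fun_prop) ?_
    refine (ae_restrict_iff' measurableSet_ball).mpr (Filter.Eventually.of_forall ?_)
    intro y hy
    have hy1 : ‖y‖ ≤ 1 := by
      have := mem_ball.mp hy; rw [dist_eq_norm, sub_zero] at this; linarith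
    rw [Real.norm_eq_abs, abs_of_nonneg (Real.rpow_nonneg (norm_nonneg _) _)]
    exact Real.rpow_le_one (norm_nonneg _) hy1 hp0
  · have hpne : p ≠ 0 := hp0.ne
    constructor
    · apply Measurable.aestronglyMeasurable; fun_prop
    · rw [HasFiniteIntegral]
      have hnn : ∀ y : EuclideanSpace ℝ (Fin n), 0 ≤ ‖y‖ ^ p :=
        fun y => Real.rpow_nonneg (norm_nonneg _) _
      have hrw : ∀ y : EuclideanSpace ℝ (Fin n),
          ‖‖y‖ ^ p‖ₑ = ENNReal.ofReal (‖y‖ ^ p) := by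
        intro y; rw [← Real.enorm_eq_ofReal (hnn y)]
      simp_rw [hrw]
      rw [lintegral_eq_lintegral_meas_le _ (Filter.Eventually.of_forall hnn)
        (by apply Measurable.aemeasurable; fun_prop)]
      set ν := volume.restrict (ball (0 : EuclideanSpace ℝ (Fin n)) 1)
      calc ∫⁻ t in Ioi 0, ν {a | t ≤ ‖a‖ ^ p}
          ≤ ∫⁻ t in Ioc 0 1 ∪ Ioi 1, ν {a | t ≤ ‖a‖ ^ p} :=
            lintegral_mono_set Ioi_subset_Ioc_union_Ioi
        _ ≤ (∫⁻ t in Ioc 0 1, ν {a | t ≤ ‖a‖ ^ p}) + ∫⁻ t in Ioi 1, ν {a | t ≤ ‖a‖ ^ p} :=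
            lintegral_union_le _ _ _
        _ < ⊤ := by
            rw [ENNReal.add_lt_top]
            constructor
            · calc (∫⁻ t in Ioc 0 1, ν {a | t ≤ ‖a‖ ^ p})
                  ≤ ∫⁻ _t in Ioc (0:ℝ) 1, volume (ball (0 : EuclideanSpace ℝ (Fin n)) 1) := by
                    refine lintegral_mono fun t => ?_
                    refine le_trans (measure_mono (subset_univ _)) ?_
                    simp [ν]
                _ = volume (ball (0 : EuclideanSpace ℝ (Fin n)) 1) * volume (Ioc (0:ℝ) 1) :=
                    setLIntegral_const _ _
                _ < ⊤ := by
                    apply ENNReal.mul_lt_top measure_ball_lt_top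
                    simp [Real.volume_Ioc]
            · have hsub : ∀ t : ℝ, 0 < t → ν {a | t ≤ ‖a‖ ^ p}
                  ≤ ENNReal.ofReal (t ^ (p⁻¹ * n)) *
                    volume (closedBall (0 : EuclideanSpace ℝ (Fin n)) 1) := by
                intro t ht
                have step1 : ν {a | t ≤ ‖a‖ ^ p}
                    ≤ volume {a : EuclideanSpace ℝ (Fin n) | t ≤ ‖a‖ ^ p} :=
                  Measure.restrict_le_self _
                have step2 : {a : EuclideanSpace ℝ (Fin n) | t ≤ ‖a‖ ^ p}
                    ⊆ closedBall 0 (t ^ p⁻¹) := by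
                  intro a ha
                  simp only [mem_setOf_eq] at ha
                  have ha0 : a ≠ 0 := by
                    intro h0
                    rw [h0] at ha
                    simp only [norm_zero] at ha
                    rw [Real.zero_rpow hpne] at ha
                    linarith
                  have hna : 0 < ‖a‖ := norm_pos_iff.mpr ha0
                  rw [mem_closedBall, dist_eq_norm, sub_zero]
                  exact (Real.le_rpow_inv_iff_of_neg hna ht hp0).mpr ha
                refine le_trans step1 (le_trans (measure_mono step2) ?_)
                rw [Measure.addHaar_closedBall _ _ (Real.rpow_nonneg ht.le _)]
                rw [finrank_euclideanSpace_fin]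
                rw [← Real.rpow_natCast (t ^ p⁻¹) n, ← Real.rpow_mul ht.le]
                exact mul_le_mul_right (measure_mono ball_subset_closedBall) _
              calc (∫⁻ t in Ioi 1, ν {a | t ≤ ‖a‖ ^ p})
                  ≤ ∫⁻ t in Ioi (1:ℝ), ENNReal.ofReal (t ^ (p⁻¹ * n)) *
                      volume (closedBall (0 : EuclideanSpace ℝ (Fin n)) 1) := by
                    refine setLIntegral_mono' measurableSet_Ioi fun t ht => ?_
                    exact hsub t (lt_trans one_pos ht)
                _ = (∫⁻ t in Ioi (1:ℝ), ENNReal.ofReal (t ^ (p⁻¹ * n))) *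
                      volume (closedBall (0 : EuclideanSpace ℝ (Fin n)) 1) :=
                    lintegral_mul_const' _ _ measure_closedBall_lt_top.ne
                _ < ⊤ := by
                    apply ENNReal.mul_lt_top _ measure_closedBall_lt_top
                    have hexp : p⁻¹ * n < -1 := by
                      rw [inv_mul_eq_div, div_lt_iff_of_neg hp0]
                      linarith
                    exact (integrableOn_Ioi_rpow_of_lt hexp one_pos).setLIntegral_lt_top

end Aux

theorem supersolution_exp_wedge
    (n : ℕ) (hn : 1 ≤ n) (s : ℝ) (hs : s ∈ Set.Ioo (0 : ℝ) 1)
    (lam Lam : ℝ) (hlam : 0 < lam) (hlamLam : lam ≤ Lam) :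
    ∃ C > (0 : ℝ), ∀ e : EuclideanSpace ℝ (Fin n), ‖e‖ = 1 →
      ∀ μ : EuclideanSpace ℝ (Fin n) → ℝ, IsKernel lam Lam μ →
      ∀ x : EuclideanSpace ℝ (Fin n), ⟪e, x⟫ ≠ 0 →
        intOK s (fun z => Real.exp (-|⟪e, z⟫|)) x ∧
        opL s μ (fun z => Real.exp (-|⟪e, z⟫|)) x ≤ C := by
  obtain ⟨hs0, hs1⟩ := hs
  have hn1 : (1:ℝ) ≤ (n:ℝ) := by exact_mod_cast hn
  set q : ℝ := (n : ℝ) + 2 * s with hqdef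
  have hq0 : 0 < q := by rw [hqdef]; linarith
  have hqn : (n : ℝ) < q := by rw [hqdef]; linarith
  have hq2 : -(n:ℝ) < 2 - q := by rw [hqdef]; linarith
  have hLam : 0 < Lam := lt_of_lt_of_le hlam hlamLam
  have kk_eq : ∀ y : EuclideanSpace ℝ (Fin n), kk n s y = ‖y‖ ^ (-q) := fun y => rfl
  have kk_nonneg : ∀ y : EuclideanSpace ℝ (Fin n), 0 ≤ kk n s y :=
    fun y => Real.rpow_nonneg (norm_nonneg _) _
  have kk_zero : kk n s 0 = 0 := by
    rw [kk_eq, norm_zero, Real.zero_rpow (by linarith : -q ≠ 0)]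
  have kk_meas : Measurable (kk n s) := by unfold kk; fun_prop
  have kk_prod : ∀ y : EuclideanSpace ℝ (Fin n),
      ‖y‖ ^ 2 * kk n s y ≤ ‖y‖ ^ ((2:ℝ) - q) := by
    intro y
    rcases eq_or_ne y 0 with rfl | hy
    · rw [kk_zero]
      simp only [norm_zero, mul_zero]
      exact Real.rpow_nonneg le_rfl _
    · have hny : 0 < ‖y‖ := norm_pos_iff.mpr hy
      rw [kk_eq]
      rw [show ((2:ℝ) - q) = ((2:ℕ):ℝ) + (-q) by push_cast; ring]
      rw [Real.rpow_add hny, Real.rpow_natCast]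
  -- the majorant M
  set M : EuclideanSpace ℝ (Fin n) → ℝ := fun y => min (2 * ‖y‖ ^ 2) 1 * kk n s y with hM
  have hMnonneg : ∀ y, 0 ≤ M y := fun y =>
    mul_nonneg (le_min (by positivity) zero_le_one) (kk_nonneg y)
  have hMmeas : Measurable M := by
    refine Measurable.mul ?_ kk_meas
    exact ((continuous_const.mul ((continuous_norm).pow 2)).min continuous_const).measurable
  have hMball : IntegrableOn M (ball 0 1) := by
    refine Integrable.mono' ((intOn_ball_rpow n (p := 2 - q) hq2).const_mul 2)
      hMmeas.aestronglyMeasurable.restrict (Filter.Eventually.of_forall fun y => ?_)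
    rw [Real.norm_eq_abs, abs_of_nonneg (hMnonneg y)]
    calc M y ≤ 2 * ‖y‖ ^ 2 * kk n s y :=
          mul_le_mul_of_nonneg_right (min_le_left _ _) (kk_nonneg y)
      _ = 2 * (‖y‖ ^ 2 * kk n s y) := by ring
      _ ≤ 2 * ‖y‖ ^ ((2:ℝ) - q) := by linarith [kk_prod y]
  have hMcompl : IntegrableOn M (ball 0 1)ᶜ := by
    refine Integrable.mono' (intOn_compl_rpow n hqn)
      hMmeas.aestronglyMeasurable.restrict (Filter.Eventually.of_forall fun y => ?_)
    rw [Real.norm_eq_abs, abs_of_nonneg (hMnonneg y)]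
    calc M y ≤ 1 * kk n s y := mul_le_mul_of_nonneg_right (min_le_right _ _) (kk_nonneg y)
      _ = ‖y‖ ^ (-q) := by rw [one_mul, kk_eq]
  have hMint : Integrable M := by
    have h := hMball.union hMcompl
    rwa [union_compl_self, integrableOn_univ] at h
  have hI0 : 0 ≤ ∫ y, M y := integral_nonneg hMnonneg
  refine ⟨Lam * (∫ y, M y) + 1, by nlinarith [mul_nonneg hLam.le hI0], ?_⟩
  intro e he μ hμ x hx
  obtain ⟨hμmeas, _, hμbd⟩ := hμ
  set φ : EuclideanSpace ℝ (Fin n) → ℝ := fun z => Real.exp (-|⟪e, z⟫|) with hφ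
  set a : ℝ := ⟪e, x⟫ with ha
  have hd2 : ∀ y, d2 φ x y =
      (Real.exp (-|a + ⟪e, y⟫|) + Real.exp (-|a - ⟪e, y⟫|)) / 2 - Real.exp (-|a|) := by
    intro y
    simp only [hφ, d2, inner_add_right, inner_sub_right, ← ha]
  have htle : ∀ y : EuclideanSpace ℝ (Fin n), |⟪e, y⟫| ≤ ‖y‖ := by
    intro y
    have h := abs_real_inner_le_norm e y
    rwa [he, one_mul] at h
  have habs : ∀ y, |d2 φ x y| ≤ 1 := fun y => by rw [hd2 y]; exact E_le_one _ _
  have hsmall : ∀ y : EuclideanSpace ℝ (Fin n), ‖y‖ ≤ 1 → d2 φ x y ≤ 2 * ‖y‖ ^ 2 := by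
    intro y hy
    rw [hd2 y]
    refine le_trans (E_le_cosh a ⟪e, y⟫) ?_
    refine le_trans (cosh_sub_one_le _ (le_trans (htle y) hy)) ?_
    have h1 : ⟪e, y⟫ ^ 2 ≤ ‖y‖ ^ 2 :=
      sq_le_sq' (by linarith [(abs_le.mp (htle y)).1]) (abs_le.mp (htle y)).2
    linarith
  have hmin : ∀ y : EuclideanSpace ℝ (Fin n), d2 φ x y ≤ min (2 * ‖y‖ ^ 2) 1 := by
    intro y
    rcases le_or_gt ‖y‖ 1 with hy | hy
    · exact le_min (hsmall y hy) (abs_le.mp (habs y)).2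
    · refine le_min ?_ (abs_le.mp (habs y)).2
      have h1 : (1:ℝ) ≤ 2 * ‖y‖ ^ 2 := by nlinarith
      linarith [(abs_le.mp (habs y)).2]
  have hpos : ∀ y : EuclideanSpace ℝ (Fin n), ‖y‖ < |a| → 0 ≤ d2 φ x y := by
    intro y hy
    rw [hd2 y]
    exact E_nonneg a _ (le_trans (htle y) hy.le)
  have hA : 0 < |a| := abs_pos.mpr hx
  have hφcont : Continuous φ := by
    apply Real.continuous_exp.comp
    exact ((continuous_const.inner continuous_id).abs).neg
  have hd2cont : Continuous fun y => d2 φ x y := by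
    unfold d2
    exact (((hφcont.comp (continuous_const.add continuous_id)).add
      (hφcont.comp (continuous_const.sub continuous_id))).div_const 2).sub continuous_const
  set r : ℝ := min |a| 1 with hr
  have hr0 : 0 < r := lt_min hA one_pos
  have hfmeas : Measurable fun y => |d2 φ x y| * kk n s y :=
    hd2cont.abs.measurable.mul kk_meas
  have hball : IntegrableOn (fun y => |d2 φ x y| * kk n s y) (ball 0 r) := by
    refine Integrable.mono'
      (((intOn_ball_rpow n (p := 2 - q) hq2).mono_set
        (ball_subset_ball (min_le_right _ _))).const_mul 2)
      hfmeas.aestronglyMeasurable.restrict ?_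
    refine (ae_restrict_iff' measurableSet_ball).mpr (Filter.Eventually.of_forall fun y hy => ?_)
    have hyr : ‖y‖ < r := mem_ball_zero_iff.mp hy
    rw [Real.norm_eq_abs, abs_of_nonneg (mul_nonneg (abs_nonneg _) (kk_nonneg y))]
    have h1 : |d2 φ x y| = d2 φ x y :=
      abs_of_nonneg (hpos y (lt_of_lt_of_le hyr (min_le_left _ _)))
    calc |d2 φ x y| * kk n s y ≤ 2 * ‖y‖ ^ 2 * kk n s y := by
          refine mul_le_mul_of_nonneg_right ?_ (kk_nonneg y)
          rw [h1]
          exact hsmall y (le_of_lt (lt_of_lt_of_le hyr (min_le_right _ _)))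
      _ = 2 * (‖y‖ ^ 2 * kk n s y) := by ring
      _ ≤ 2 * ‖y‖ ^ ((2:ℝ) - q) := by linarith [kk_prod y]
  have hkk_compl_r : IntegrableOn (kk n s) (ball 0 r)ᶜ := by
    have h1 : IntegrableOn (kk n s) (closedBall 0 1 \ ball 0 r) := by
      refine Measure.integrableOn_of_bounded (M := r ^ (-q))
        ((measure_mono diff_subset).trans_lt measure_closedBall_lt_top).ne
        kk_meas.aestronglyMeasurable ?_
      refine (ae_restrict_iff' (measurableSet_closedBall.diff measurableSet_ball)).mpr
        (Filter.Eventually.of_forall fun y hy => ?_)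
      have hyr : r ≤ ‖y‖ := by
        have h2 := hy.2
        simp only [mem_ball_zero_iff, not_lt] at h2
        exact h2
      rw [Real.norm_eq_abs, abs_of_nonneg (kk_nonneg y), kk_eq]
      exact Real.rpow_le_rpow_of_nonpos hr0 hyr (by linarith)
    have h2 : IntegrableOn (kk n s) (ball 0 1)ᶜ := intOn_compl_rpow n hqn
    have h3 : (ball (0 : EuclideanSpace ℝ (Fin n)) r)ᶜ ⊆
        (closedBall 0 1 \ ball 0 r) ∪ (ball 0 1)ᶜ := by
      intro y hy
      rcases le_or_gt ‖y‖ 1 with h | h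
      · exact Or.inl ⟨mem_closedBall_zero_iff.mpr h, hy⟩
      · refine Or.inr ?_
        simp only [mem_compl_iff, mem_ball_zero_iff, not_lt]
        linarith
    exact (h1.union h2).mono_set h3
  have hcompl : IntegrableOn (fun y => |d2 φ x y| * kk n s y) (ball 0 r)ᶜ := by
    refine Integrable.mono' hkk_compl_r hfmeas.aestronglyMeasurable.restrict
      (Filter.Eventually.of_forall fun y => ?_)
    rw [Real.norm_eq_abs, abs_of_nonneg (mul_nonneg (abs_nonneg _) (kk_nonneg y))]
    calc |d2 φ x y| * kk n s y ≤ 1 * kk n s y :=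
        mul_le_mul_of_nonneg_right (habs y) (kk_nonneg y)
      _ = kk n s y := one_mul _
  have hintOK : intOK s φ x := by
    have h := hball.union hcompl
    rwa [union_compl_self, integrableOn_univ] at h
  refine ⟨hintOK, ?_⟩
  set g : EuclideanSpace ℝ (Fin n) → ℝ :=
    fun y => d2 φ x y * (μ (‖y‖⁻¹ • y) * kk n s y) with hg
  have hgmeas : Measurable g := by
    refine hd2cont.measurable.mul (Measurable.mul ?_ kk_meas)
    exact hμmeas.comp (measurable_norm.inv.smul measurable_id)
  have hθ : ∀ y : EuclideanSpace ℝ (Fin n), y ≠ 0 → ‖(‖y‖⁻¹ • y : EuclideanSpace ℝ (Fin n))‖ = 1 := by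
    intro y hy
    rw [norm_smul, norm_inv, norm_norm, inv_mul_cancel₀ (norm_ne_zero_iff.mpr hy)]
  have hgbd : ∀ y, ‖g y‖ ≤ Lam * (|d2 φ x y| * kk n s y) := by
    intro y
    rcases eq_or_ne y 0 with rfl | hy
    · simp [hg, kk_zero]
    · obtain ⟨hl, hu⟩ := hμbd _ (hθ y hy)
      rw [Real.norm_eq_abs, hg]
      simp only
      rw [abs_mul, abs_mul, abs_of_nonneg (kk_nonneg y)]
      have h5 : |μ (‖y‖⁻¹ • y)| ≤ Lam := abs_le.mpr ⟨by linarith, hu⟩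
      have h0 := abs_nonneg (d2 φ x y)
      have h1 := kk_nonneg y
      calc |d2 φ x y| * (|μ (‖y‖⁻¹ • y)| * kk n s y)
          ≤ |d2 φ x y| * (Lam * kk n s y) :=
            mul_le_mul_of_nonneg_left (mul_le_mul_of_nonneg_right h5 h1) h0
        _ = Lam * (|d2 φ x y| * kk n s y) := by ring
  have hgint : Integrable g :=
    Integrable.mono' (hintOK.const_mul Lam) hgmeas.aestronglyMeasurable
      (Filter.Eventually.of_forall hgbd)
  have hptwise : ∀ y, g y ≤ Lam * M y := by
    intro y
    rcases eq_or_ne y 0 with rfl | hy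
    · simp [hg, hM, kk_zero]
    · obtain ⟨hl, hu⟩ := hμbd _ (hθ y hy)
      have hk := kk_nonneg y
      rcases le_or_gt 0 (d2 φ x y) with hd | hd
      · have h6 : g y ≤ min (2 * ‖y‖ ^ 2) 1 * (Lam * kk n s y) := by
          refine mul_le_mul (hmin y) ?_ (mul_nonneg (by linarith) hk) ?_
          · exact mul_le_mul_of_nonneg_right hu hk
          · exact le_min (by positivity) zero_le_one
        calc g y ≤ min (2 * ‖y‖ ^ 2) 1 * (Lam * kk n s y) := h6
          _ = Lam * M y := by rw [hM]; ring
      · have h7 : g y ≤ 0 :=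
          mul_nonpos_of_nonpos_of_nonneg hd.le (mul_nonneg (by linarith) hk)
        exact le_trans h7 (mul_nonneg hLam.le (hMnonneg y))
  have hfin : opL s μ φ x ≤ ∫ y, Lam * M y := by
    have h8 : (∫ y, g y) ≤ ∫ y, Lam * M y :=
      integral_mono hgint (hMint.const_mul Lam) hptwise
    exact h8
  rw [integral_const_mul] at hfin
  linarith
end
end
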